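/- Let V ⊆ ℂ² be the common zero locus of a family of polynomials in ℂ[X,Y]. If V is invariant under the diagonal ℂ*-action λ·(x,y) = (λx, λy) for all λ ∈ ℂ*, and V contains the line {(1,t) : t ∈ ℂ}, then V = ℂ². -/

import Mathlib

lemma aux_eval_eval₂ (f : MvPolynomial (Fin 2) ℂ) (z w : ℂ) :
    Polynomial.eval z
      (MvPolynomial.eval₂ Polynomial.C ![Polynomial.X, Polynomial.C w] f) =
    MvPolynomial.eval ![z, w] f := by
  rw [MvPolynomial.polynomial_eval_eval₂]
  have h1 : (Polynomial.evalRingHom z).comp Polynomial.C = RingHom.id ℂ := by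
    ext x; simp
  have h2 : (fun s => Polynomial.eval z (![Polynomial.X, Polynomial.C w] s)) = ![z, w] := by
    funext i; fin_cases i <;> simp
  rw [h1, h2, MvPolynomial.eval₂_id]

/-- A Zariski-closed subset of `ℂ²` (the common zero locus of a family of polynomials)
which is invariant under the diagonal `ℂ*`-action and contains the line `{(1,t)}`
must be all of `ℂ²`. -/
theorem zero_locus_eq_univ_of_cstar_invariant_of_contains_line
    (S : Set (MvPolynomial (Fin 2) ℂ))
    (V : Set (Fin 2 → ℂ))
    (hV : V = {p : Fin 2 → ℂ | ∀ f ∈ S, MvPolynomial.eval p f = 0})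
    (hinv : ∀ (lam : ℂ), lam ≠ 0 → ∀ v ∈ V, (fun i => lam * v i) ∈ V)
    (hline : ∀ t : ℂ, ![1, t] ∈ V) :
    V = Set.univ := by
  have key : ∀ z : ℂ, z ≠ 0 → ∀ w : ℂ, ![z, w] ∈ V := by
    intro z hz w
    have := hinv z hz ![1, w / z] (hline (w / z))
    convert this using 1
    funext i
    fin_cases i <;> simp <;> field_simp
  subst hV
  ext p
  simp only [Set.mem_setOf_eq, Set.mem_univ, iff_true]
  intro f hf
  set q : Polynomial ℂ :=
    MvPolynomial.eval₂ Polynomial.C ![Polynomial.X, Polynomial.C (p 1)] f with hq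
  have hroots : ∀ z : ℂ, z ≠ 0 → Polynomial.eval z q = 0 := by
    intro z hz
    rw [hq, aux_eval_eval₂]
    exact key z hz (p 1) f hf
  have hq0 : q = 0 := by
    apply Polynomial.eq_zero_of_infinite_isRoot
    apply Set.Infinite.mono (s := {z : ℂ | z ≠ 0})
    · intro z hz
      exact hroots z hz
    · exact Set.infinite_of_finite_compl (by simp)
  have heval : Polynomial.eval (p 0) q = 0 := by rw [hq0]; simp
  rw [hq, aux_eval_eval₂] at heval
  have hp : ![p 0, p 1] = p := by
    funext i; fin_cases i <;> rfl
  rwa [hp] at heval
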